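/- The distance function d on the four-vertex star tree (center 4 adjacent to leaves 1, 2, 3), with d(i,4)=1 and d(i,j)=2 for distinct leaves i,j, is measure definite, but d² is not negative definite; equivalently, there are no vectors v_1,v_2,v_3,v_4 in a real Hilbert space with ‖v_i − v_j‖ = d(i,j) for all i,j. -/
import Mathlib


open MeasureTheory
open scoped symmDiff

/-- A kernel is measure definite if it arises as `μ(S_x ∆ S_y)`. -/
def IsMeasureDefinite {Γ : Type*} (f : Γ → Γ → ℝ) : Prop :=
  (∀ x y, 0 ≤ f x y) ∧
  ∃ (Ω : Type) (_ : MeasurableSpace Ω) (μ : Measure Ω) (S : Γ → Set Ω),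
    (∀ x, MeasurableSet (S x)) ∧ ∀ x y, μ (S x ∆ S y) = ENNReal.ofReal (f x y)

/-- The distance on the four-vertex star tree: vertex `3` is the center. -/
noncomputable def starDist (i j : Fin 4) : ℝ :=
  if i = j then 0 else if i = 3 ∨ j = 3 then 1 else 2

lemma count_pair_aux (a b : Fin 4) (h : a ≠ b) :
    (Measure.count ({a} ∆ {b} : Set (Fin 4))) = 2 := by
  have hs : ({a} ∆ {b} : Set (Fin 4)) = {a, b} := by
    rw [Set.symmDiff_def]
    ext x
    simp only [Set.mem_union, Set.mem_diff, Set.mem_singleton_iff, Set.mem_insert_iff]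
    constructor
    · rintro (⟨h1,_⟩|⟨h1,_⟩) <;> simp [h1]
    · rintro (rfl|rfl)
      · exact Or.inl ⟨rfl, h⟩
      · exact Or.inr ⟨rfl, h.symm⟩
  rw [hs, Measure.count_apply_finite _ (Set.toFinite _)]
  rw [show (Set.toFinite ({a,b}:Set (Fin 4))).toFinset = {a,b} by ext x; simp]
  rw [Finset.card_insert_of_notMem (by simpa using h), Finset.card_singleton]
  rfl

lemma starDist_count_key (x y : Fin 4) :
    Measure.count ((if x = 3 then (∅:Set (Fin 4)) else {x}) ∆ (if y = 3 then ∅ else {y}))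
      = ENNReal.ofReal (starDist x y) := by
  rcases eq_or_ne x y with rfl | hxy
  · simp [starDist, symmDiff_self]
  rcases eq_or_ne x 3 with rfl|hx <;> rcases eq_or_ne y 3 with rfl|hy
  · exact absurd rfl hxy
  · simp [hy, hxy, starDist, Set.symmDiff_def, Measure.count_singleton']
  · simp [hx, hxy, starDist, Set.symmDiff_def, Measure.count_singleton']
  · rw [if_neg hx, if_neg hy, count_pair_aux _ _ hxy]
    simp [starDist, hxy, hx, hy]

lemma starDist_no_embed (E : Type) [NormedAddCommGroup E] [InnerProductSpace ℝ E]
    (v : Fin 4 → E) : ¬ (∀ i j, ‖v i - v j‖ = starDist i j) := by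
  intro h
  have hd : ∀ i : Fin 4, i ≠ 3 → ‖v i - v 3‖ = 1 := by
    intro i hi; rw [h i 3]; simp [starDist, hi]
  have opp : ∀ i j : Fin 4, i ≠ 3 → j ≠ 3 → i ≠ j →
      v i - v 3 = -(v j - v 3) := by
    intro i j hi hj hij
    have h1 : ‖v i - v 3‖ = 1 := hd i hi
    have h2 : ‖v j - v 3‖ = 1 := hd j hj
    have h3 : ‖(v i - v 3) - (v j - v 3)‖ = 2 := by
      rw [show (v i - v 3) - (v j - v 3) = v i - v j by abel, h i j]
      simp [starDist, hij, hi, hj]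
    have hpar := parallelogram_law_with_norm ℝ (v i - v 3) (v j - v 3)
    have h0 : ‖(v i - v 3) + (v j - v 3)‖ = 0 := by
      nlinarith [norm_nonneg ((v i - v 3) + (v j - v 3))]
    have := norm_eq_zero.mp h0
    linear_combination (norm := module) this
  have e1 : v 0 - v 3 = -(v 1 - v 3) := opp 0 1 (by decide) (by decide) (by decide)
  have e2 : v 0 - v 3 = -(v 2 - v 3) := opp 0 2 (by decide) (by decide) (by decide)
  have hv12 : v 1 = v 2 := by
    have := neg_injective (e1.symm.trans e2)
    exact sub_left_injective this
  have h12 : ‖v 1 - v 2‖ = 2 := by rw [h 1 2]; simp [starDist]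
  rw [hv12, sub_self, norm_zero] at h12
  norm_num at h12

lemma starDist_notnegdef :
    ¬ (∀ (n : ℕ) (x : Fin n → Fin 4) (c : Fin n → ℝ), (∑ i, c i = 0) →
        ∑ i, ∑ j, c i * c j * (starDist (x i) (x j)) ^ 2 ≤ 0) := by
  intro h
  have := h 4 id ![1,1,1,-3] (by simp [Fin.sum_univ_four]; norm_num)
  simp [Fin.sum_univ_four, starDist] at this
  norm_num at this

/-- `starDist` is measure definite, but its square is not negative
definite; equivalently, no vectors in a real Hilbert space realize these distances. -/
theorem star_tree_dist_measure_definite_sq_not_negdef :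
    IsMeasureDefinite starDist ∧
    ¬ (∀ (n : ℕ) (x : Fin n → Fin 4) (c : Fin n → ℝ), (∑ i, c i = 0) →
        ∑ i, ∑ j, c i * c j * (starDist (x i) (x j)) ^ 2 ≤ 0) ∧
    (∀ (E : Type) (_ : NormedAddCommGroup E), ∀ _ : InnerProductSpace ℝ E,
      ∀ v : Fin 4 → E, ¬ (∀ i j, ‖v i - v j‖ = starDist i j)) := by
  refine ⟨⟨?_, ?_⟩, starDist_notnegdef, fun E _ _ v => starDist_no_embed E v⟩
  · intro x y
    unfold starDist
    split_ifs <;> norm_num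
  · exact ⟨Fin 4, inferInstance, Measure.count,
      fun i => if i = 3 then ∅ else {i},
      fun x => by measurability,
      starDist_count_key⟩
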